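/- ℵ₁-freeness is preserved by unions of chains with ℵ₁-free quotients at limit stages: if (G_j)_{j<α} is an increasing continuous chain of abelian groups such that each G_j is ℵ₁-free and G_{j+1}/G_j is ℵ₁-free for all j, then G = ⋃_{j<α} G_j is ℵ₁-free. -/

import Mathlib

open Submodule Set Ordinal

def Aleph1Free (G : Type*) [AddCommGroup G] : Prop :=
  ∀ H : AddSubgroup G, Countable H → Module.Free ℤ H

private lemma exists_step {G : Type*} [AddCommGroup G] (A B : Submodule ℤ G) (hAB : A ≤ B)
    (hq : Module.Free ℤ (↥B ⧸ A.comap B.subtype)) :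
    ∃ t : Set G, t ⊆ (B : Set G) ∧ A ⊔ span ℤ t = B ∧
      LinearIndependent ℤ ((Submodule.Quotient.mk (p := A)) ∘ (Subtype.val : t → G)) := by
  classical
  set N : Submodule ℤ ↥B := A.comap B.subtype with hN
  haveI := hq
  set b : Module.Basis (Module.Free.ChooseBasisIndex ℤ (↥B ⧸ N)) ℤ (↥B ⧸ N) :=
    Module.Free.chooseBasis ℤ _ with hb
  choose ℓ hℓ using fun i => Submodule.Quotient.mk_surjective N (b i)
  have hker : N ≤ LinearMap.ker (A.mkQ ∘ₗ B.subtype) := by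
    intro x hx
    simpa [LinearMap.mem_ker, Submodule.Quotient.mk_eq_zero, hN] using hx
  set e : (↥B ⧸ N) →ₗ[ℤ] G ⧸ A := N.liftQ (A.mkQ ∘ₗ B.subtype) hker with he
  have heinj : LinearMap.ker e = ⊥ := by
    rw [Submodule.ker_liftQ_eq_bot]
    intro x hx
    simpa [LinearMap.mem_ker, Submodule.Quotient.mk_eq_zero, hN] using hx
  have heb : ∀ i, e (b i) = Submodule.Quotient.mk ((ℓ i : G)) := by
    intro i; rw [← hℓ i]; rfl
  have hg : LinearIndependent ℤ (fun i => Submodule.Quotient.mk (p := A) ((ℓ i : G))) := by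
    have h1 := (b.linearIndependent).map' e heinj
    have : (fun i => Submodule.Quotient.mk (p := A) ((ℓ i : G))) = e ∘ b := by
      funext i; rw [Function.comp_apply, heb]
    rw [this]; exact h1
  set w : _ → G := fun i => ((ℓ i : G)) with hw
  have hwinj : Function.Injective w := by
    intro i j hij
    apply b.injective
    apply LinearMap.ker_eq_bot.mp heinj
    rw [heb, heb]
    exact congrArg _ hij
  refine ⟨Set.range w, ?_, ?_, ?_⟩
  · rintro _ ⟨i, rfl⟩; exact (ℓ i).2
  · apply le_antisymm
    · exact sup_le hAB (span_le.mpr (by rintro _ ⟨i, rfl⟩; exact (ℓ i).2))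
    · intro x hx
      set y : ↥B := ⟨x, hx⟩ with hy
      set c := b.repr (Submodule.Quotient.mk y) with hc
      set z : ↥B := c.sum fun i a => a • ℓ i with hz
      have hmkz : Submodule.Quotient.mk (p := N) z = Submodule.Quotient.mk y := by
        rw [hz, ← Submodule.mkQ_apply, map_finsuppSum]
        simp only [map_smul, Submodule.mkQ_apply, hℓ]
        rw [hc, ← Finsupp.linearCombination_apply, b.linearCombination_repr]
      have hyz : y - z ∈ N := (Submodule.Quotient.eq N).mp hmkz.symm
      have h1 : x - (z : G) ∈ A := hyz
      have h2 : (z : G) ∈ span ℤ (Set.range w) := by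
        rw [hz]
        rw [show ((c.sum fun i a => a • ℓ i : ↥B) : G) = c.sum fun i a => a • w i by
          simp [Finsupp.sum, AddSubmonoidClass.coe_finset_sum, hw]]
        exact Submodule.sum_mem _ fun i _ => Submodule.smul_mem _ _ (subset_span ⟨i, rfl⟩)
      have := Submodule.add_mem (A ⊔ span ℤ (Set.range w))
        (le_sup_left (a := A) h1) (le_sup_right (a := A) h2)
      simpa using this
  · have key : (Submodule.Quotient.mk (p := A)) ∘ (Subtype.val : Set.range w → G)
        = (fun i => Submodule.Quotient.mk (p := A) (w i)) ∘ (Equiv.ofInjective w hwinj).symm := by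
      funext x
      simp only [Function.comp_apply]
      congr 1
      exact (congrArg Subtype.val ((Equiv.ofInjective w hwinj).apply_symm_apply x)).symm
    rw [key]
    exact hg.comp _ (Equiv.injective _)

private lemma free_of_chain {G : Type*} [AddCommGroup G] (β : Ordinal)
    (K : Ordinal → Submodule ℤ G) (hmono : Monotone K)
    (hcont : ∀ δ ≤ β, Order.IsSuccLimit δ → K δ = ⨆ i < δ, K i)
    (h0 : Module.Free ℤ (K 0))
    (hsucc : ∀ j < β, Module.Free ℤ (↥(K (j+1)) ⧸ (K j).comap (K (j+1)).subtype)) :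
    Module.Free ℤ (K β) := by
  classical
  have hstep : ∀ j : Ordinal, ∃ t : Set G, j < β →
      t ⊆ (K (j+1) : Set G) ∧ K j ⊔ span ℤ t = K (j+1) ∧
      LinearIndependent ℤ ((Submodule.Quotient.mk (p := K j)) ∘ (Subtype.val : t → G)) := by
    intro j
    by_cases h : j < β
    · obtain ⟨t, h1, h2, h3⟩ := exists_step (K j) (K (j+1)) (hmono (le_add_right le_rfl)) (hsucc j h)
      exact ⟨t, fun _ => ⟨h1, h2, h3⟩⟩
    · exact ⟨∅, fun h' => absurd h' h⟩
  choose T hT using hstep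
  haveI := h0
  set b0 : Module.Basis (Module.Free.ChooseBasisIndex ℤ (K 0)) ℤ (K 0) :=
    Module.Free.chooseBasis ℤ _ with hb0
  set B0 : Set G := Set.range (fun i => ((b0 i : G))) with hB0
  set S : Ordinal → Set G := fun j => B0 ∪ ⋃ i : Iio j, T i.1 with hS
  have hSmono : Monotone S := by
    intro i j hij
    apply union_subset_union_right
    exact iUnion_mono' fun k => ⟨⟨k.1, lt_of_lt_of_le k.2 hij⟩, subset_rfl⟩
  have hTS : ∀ i j : Ordinal, i < j → T i ⊆ S j := fun i j hij x hx =>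
    Set.mem_union_right _ (Set.mem_iUnion.mpr ⟨⟨i, hij⟩, hx⟩)
  have main : ∀ j, j ≤ β → LinearIndependent ℤ (fun x => x : S j → G) ∧ span ℤ (S j) = K j := by
    intro j
    induction j using Ordinal.limitRecOn with
    | zero =>
      intro _
      have hS0eq : S 0 = B0 := by
        simp only [hS]
        rw [show (⋃ i : Iio (0:Ordinal), T i.1) = ∅ by
          apply iUnion_eq_empty.mpr; rintro ⟨i, hi⟩; exact absurd hi (by simp)]
        exact union_empty _
      have hli : LinearIndependent ℤ (fun i => ((b0 i : G))) :=
        (b0.linearIndependent).map' (K 0).subtype (ker_subtype _)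
      constructor
      · rw [hS0eq, hB0]
        exact (linearIndepOn_id_range_iff hli.injective).mpr hli
      · rw [hS0eq, hB0]
        have : Set.range (fun i => ((b0 i : G))) = (K 0).subtype '' (Set.range b0) := by
          rw [← Set.range_comp]; rfl
        rw [this, ← Submodule.map_span, b0.span_eq, Submodule.map_top, range_subtype]
    | add_one j IH =>
      rw [Ordinal.add_one_eq_succ]
      intro hj1
      have hj : j < β := lt_of_lt_of_le (Order.lt_succ j) hj1
      obtain ⟨IH1, IH2⟩ := IH hj.le
      obtain ⟨ht1, ht2, ht3⟩ := hT j hj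
      have hSsucc : S (Order.succ j) = S j ∪ T j := by
        apply subset_antisymm
        · apply union_subset (subset_union_of_subset_left subset_union_left _)
          apply iUnion_subset
          rintro ⟨i, hi⟩
          rcases lt_or_eq_of_le (Order.lt_succ_iff.mp (show i < Order.succ j from hi)) with h | h
          · exact subset_union_of_subset_left (hTS i j h) _
          · subst h; exact subset_union_right
        · exact union_subset (hSmono (Order.le_succ j)) (hTS j _ (Order.lt_succ j))
      have hsub : S j ⊆ (K j : Set G) := by rw [← IH2]; exact subset_span
      constructor
      · rw [hSsucc]
        exact LinearIndepOn.union_id_of_quotient hsub IH1 ht3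
      · rw [hSsucc, span_union, IH2, ht2, Ordinal.add_one_eq_succ]
    | limit δ hδ IH =>
      intro hδβ
      have hSδ : S δ = ⋃ i : Iio δ, S i.1 := by
        apply subset_antisymm
        · apply union_subset
          · exact subset_iUnion_of_subset ⟨0, hδ.pos⟩ subset_union_left
          · exact iUnion_subset fun i => subset_iUnion_of_subset
              ⟨Order.succ i.1, hδ.succ_lt i.2⟩ (hTS i.1 _ (Order.lt_succ i.1))
        · exact iUnion_subset fun i => hSmono i.2.le
      have hdir : Directed (· ⊆ ·) (fun i : Iio δ => S i.1) := by
        intro i j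
        rcases le_total i.1 j.1 with h | h
        exacts [⟨j, hSmono h, subset_rfl⟩, ⟨i, subset_rfl, hSmono h⟩]
      constructor
      · rw [hSδ]
        exact linearIndepOn_iUnion_of_directed (R := ℤ) (v := id) hdir
          fun i => (IH i.1 i.2 (i.2.le.trans hδβ)).1
      · rw [hSδ, span_iUnion, hcont δ hδβ hδ, iSup_subtype']
        exact iSup_congr fun i => (IH i.1 i.2 (i.2.le.trans hδβ)).2
  obtain ⟨hli, hsp⟩ := main β le_rfl
  have hb := Module.Basis.span hli
  rw [Subtype.range_coe] at hb
  haveI := Module.Free.of_basis hb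
  exact Module.Free.of_equiv (LinearEquiv.ofEq _ _ hsp)

section Helpers

variable {G : Type*} [AddCommGroup G]

private lemma free_int_congr {M : Type*} [AddCommGroup M] {i1 i2 : Module ℤ M}
    (h : @Module.Free ℤ M _ _ i1) : @Module.Free ℤ M _ _ i2 := by
  haveI : Unique (Module ℤ M) := AddCommGroup.uniqueIntModule
  rwa [Subsingleton.elim i2 i1]

private lemma free_of_addEquiv0 {M N : Type*} [AddCommGroup M] [AddCommGroup N]
    (e : M ≃+ N) (h : Module.Free ℤ M) : Module.Free ℤ N := by
  haveI := h
  exact Module.Free.of_equiv e.toIntLinearEquiv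

private lemma free_of_addEquiv {M N : Type*} [AddCommGroup M] [AddCommGroup N]
    {iM : Module ℤ M} {iN : Module ℤ N} (e : M ≃+ N) (h : @Module.Free ℤ M _ _ iM) :
    @Module.Free ℤ N _ _ iN :=
  free_int_congr (free_of_addEquiv0 e (free_int_congr h))

private def subEquiv (W : AddSubgroup G) : ↥(AddSubgroup.toIntSubmodule W) ≃+ ↥W where
  toFun := fun x => ⟨x.1, x.2⟩
  invFun := fun x => ⟨x.1, x.2⟩
  left_inv := fun _ => rfl
  right_inv := fun _ => rfl
  map_add' := fun _ _ => rfl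

private def infEquiv (A B : AddSubgroup G) :
    ↥(AddSubgroup.toIntSubmodule A ⊓ AddSubgroup.toIntSubmodule B) ≃+ ↥(A ⊓ B) where
  toFun := fun x => ⟨x.1, x.2⟩
  invFun := fun x => ⟨x.1, x.2⟩
  left_inv := fun _ => rfl
  right_inv := fun _ => rfl
  map_add' := fun _ _ => rfl

private lemma mem_biSup_chain {f : Ordinal → AddSubgroup G}
    (hmono : ∀ i j : Ordinal, i ≤ j → f i ≤ f j) {δ : Ordinal} (hδ : 0 < δ) {x : G}
    (hx : x ∈ ⨆ i < δ, f i) : ∃ i < δ, x ∈ f i := by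
  rw [iSup_subtype'] at hx
  haveI : Nonempty {i : Ordinal // i < δ} := ⟨⟨0, hδ⟩⟩
  have hdir : Directed (· ≤ ·) fun i : {i : Ordinal // i < δ} => f i.1 := by
    intro i j
    rcases le_total i.1 j.1 with h | h
    exacts [⟨j, hmono _ _ h, le_rfl⟩, ⟨i, le_rfl, hmono _ _ h⟩]
  obtain ⟨i, hi⟩ := (AddSubgroup.mem_iSup_of_directed hdir).mp hx
  exact ⟨i.1, i.2, hi⟩

end Helpers

/-- ℵ₁-freeness is preserved by unions of increasing continuous chains with
ℵ₁-free quotients at successor stages. -/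
theorem union_chain_aleph1Free {G : Type*} [AddCommGroup G]
    (α : Ordinal) (f : Ordinal → AddSubgroup G)
    (hmono : ∀ i j : Ordinal, i ≤ j → f i ≤ f j)
    (hcont : ∀ j < α, Order.IsSuccLimit j → f j = ⨆ i < j, f i)
    (hfree : ∀ j < α, Aleph1Free (f j))
    (hquot : ∀ j : Ordinal, j + 1 < α →
      Aleph1Free (↥(f (j + 1)) ⧸ ((f j).addSubgroupOf (f (j + 1))))) :
    Aleph1Free ↥(⨆ j < α, f j) := by
  rcases Ordinal.zero_or_succ_or_isSuccLimit α with rfl | ⟨γ, rfl⟩ | hα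
  · -- α = 0
    rw [show (⨆ j < (0 : Ordinal), f j) = ⊥ by simp]
    haveI : Subsingleton ↥(⊥ : AddSubgroup G) := by
      constructor; rintro ⟨a, ha⟩ ⟨b, hb⟩
      simp only [AddSubgroup.mem_bot] at ha hb
      simp [ha, hb]
    intro H _
    exact Module.Free.of_basis (Module.Basis.empty (ι := Empty) _)
  · -- α = succ γ
    rw [show (⨆ j < Order.succ γ, f j) = f γ from
      le_antisymm (iSup_le fun j => iSup_le fun hj => hmono j γ (Order.lt_succ_iff.mp hj))
        (le_iSup_of_le γ (le_iSup_of_le (Order.lt_succ γ) le_rfl))]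
    exact hfree γ (Order.lt_succ γ)
  · -- α limit
    set T : AddSubgroup G := ⨆ j < α, f j with hTdef
    intro H hH
    set W : AddSubgroup G := H.map T.subtype with hWdef
    have hWT : W ≤ T := by
      rintro _ ⟨y, -, rfl⟩
      exact y.2
    have eH : ↥H ≃+ ↥W := AddSubgroup.equivMapOfInjective H T.subtype T.subtype_injective
    have hWc : (W : Set G).Countable := by
      rw [hWdef, AddSubgroup.coe_map]
      exact (Set.countable_coe_iff.mp hH).image _
    set W' : Submodule ℤ G := AddSubgroup.toIntSubmodule W with hW'def
    set Msub : Ordinal → Submodule ℤ G := fun j => AddSubgroup.toIntSubmodule (f j) with hMdef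
    set K : Ordinal → Submodule ℤ G := fun j => if j < α then W' ⊓ Msub j else W' with hKdef
    have hKlt : ∀ {j}, j < α → K j = W' ⊓ Msub j := fun {j} hj => if_pos hj
    have hKge : ∀ {j}, ¬ j < α → K j = W' := fun {j} hj => if_neg hj
    have hMmono : Monotone Msub := fun i j hij => by
      simpa [hMdef] using hmono i j hij
    have hKmono : Monotone K := by
      intro i j hij
      by_cases hi : i < α
      · by_cases hj : j < α
        · rw [hKlt hi, hKlt hj]; exact inf_le_inf_left _ (hMmono hij)
        · rw [hKlt hi, hKge hj]; exact inf_le_left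
      · have hj : ¬ j < α := fun h => hi (lt_of_le_of_lt hij h)
        rw [hKge hi, hKge hj]
    have hWmem : ∀ x ∈ W', ∃ i < α, x ∈ f i := by
      intro x hx
      have hxT : x ∈ T := hWT hx
      rw [hTdef] at hxT
      exact mem_biSup_chain hmono hα.pos hxT
    have hKcont : ∀ δ ≤ α, Order.IsSuccLimit δ → K δ = ⨆ i < δ, K i := by
      intro δ hδα hδ
      rcases lt_or_eq_of_le hδα with hδlt | rfl
      · rw [hKlt hδlt]
        apply le_antisymm
        · intro x hx
          have hxf : x ∈ ⨆ i < δ, f i := by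
            rw [← hcont δ hδlt hδ]
            exact hx.2
          obtain ⟨i, hiδ, hfi⟩ := mem_biSup_chain hmono hδ.pos hxf
          have hle : K i ≤ ⨆ i < δ, K i := le_iSup₂ (f := fun i (_ : i < δ) => K i) i hiδ
          refine hle ?_
          rw [hKlt (hiδ.trans hδlt)]
          exact ⟨hx.1, hfi⟩
        · exact iSup_le fun i => iSup_le fun hi => by
            rw [hKlt (hi.trans hδlt)]
            exact inf_le_inf_left _ (hMmono hi.le)
      · rw [hKge (lt_irrefl δ)]
        apply le_antisymm
        · intro x hx
          obtain ⟨i, hiδ, hfi⟩ := hWmem x hx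
          have hle : K i ≤ ⨆ i < δ, K i := le_iSup₂ (f := fun i (_ : i < δ) => K i) i hiδ
          refine hle ?_
          rw [hKlt hiδ]
          exact ⟨hx, hfi⟩
        · exact iSup_le fun i => iSup_le fun hi => by
            by_cases h : i < δ
            · rw [hKlt h]; exact inf_le_left
            · rw [hKge h]
      -- note: in the δ = α case above, `hδα : δ ≤ α` became `rfl`
    have hK0 : Module.Free ℤ (K 0) := by
      rw [hKlt hα.pos]
      set A0 : AddSubgroup ↥(f 0) := (W ⊓ f 0).addSubgroupOf (f 0) with hA0
      have e0 : ↥A0 ≃+ ↥(W ⊓ f 0) := AddSubgroup.addSubgroupOfEquivOfLe inf_le_right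
      have hc0 : Countable ↥A0 := by
        haveI : Countable ↥(W ⊓ f 0) :=
          ((hWc.mono (fun x hx => hx.1 : ((W ⊓ f 0 : AddSubgroup G) : Set G) ⊆ W)).to_subtype)
        exact Countable.of_equiv _ e0.symm.toEquiv
      have hfree0 := hfree 0 hα.pos A0 hc0
      exact free_of_addEquiv ((e0.trans (infEquiv W (f 0)).symm)) hfree0
    have hKsucc : ∀ j < α, Module.Free ℤ (↥(K (j+1)) ⧸ (K j).comap (K (j+1)).subtype) := by
      intro j hj
      have hj1 : j + 1 < α := by
        rw [Ordinal.add_one_eq_succ]; exact hα.succ_lt hj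
      rw [hKlt hj1, hKlt hj]
      set B : Submodule ℤ G := W' ⊓ Msub (j+1) with hB
      set A : Submodule ℤ G := W' ⊓ Msub j with hA
      set N : Submodule ℤ ↥B := A.comap B.subtype with hNdef
      have hBf : ∀ x : ↥B, (x : G) ∈ f (j+1) := fun x => x.2.2
      set Z := ↥(f (j + 1)) ⧸ ((f j).addSubgroupOf (f (j + 1)))
      set ι : ↥B →+ ↥(f (j+1)) := AddMonoidHom.mk' (fun x => ⟨x.1, hBf x⟩)
        (fun a b => rfl) with hι
      set φ : ↥B →+ Z := (QuotientAddGroup.mk' ((f j).addSubgroupOf (f (j+1)))).comp ι with hφ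
      have hker : φ.ker = N.toAddSubgroup := by
        ext x
        constructor
        · intro hx
          have : ι x ∈ (f j).addSubgroupOf (f (j+1)) :=
            (QuotientAddGroup.eq_zero_iff _).mp hx
          have hxfj : (x : G) ∈ f j := this
          exact ⟨x.2.1, hxfj⟩
        · intro hx
          have hxfj : (x : G) ∈ f j := hx.2
          exact (QuotientAddGroup.eq_zero_iff _).mpr hxfj
      have hBc : Countable ↥B := by
        have : ((B : Set G)).Countable := hWc.mono (fun x hx => hx.1)
        exact this.to_subtype
      have hrc : Countable ↥φ.range := by
        have : ((φ.range : Set Z)).Countable := by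
          rw [AddMonoidHom.coe_range]
          exact Set.countable_range _
        exact this.to_subtype
      have hrfree := hquot j hj1 φ.range hrc
      have e := (QuotientAddGroup.quotientAddEquivOfEq hker.symm).trans
        (QuotientAddGroup.quotientKerEquivRange φ)
      exact free_of_addEquiv e.symm hrfree
    have hchain := free_of_chain α K hKmono hKcont hK0 hKsucc
    have hKα : K α = W' := hKge (lt_irrefl α)
    refine free_of_addEquiv ?_ hchain
    exact ((LinearEquiv.ofEq _ _ hKα).toAddEquiv.trans (subEquiv W)).trans eH.symm
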